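/- In the cascading-failure model, suppose V_src = V_ld = V (every vertex is both a source and a load). Then for every graph G obtained from G₀ by deleting vertices and/or edges and every edge {i,j} of G, load_G({i,j}) = 1/deg_G(i) + 1/deg_G(j), where deg_G denotes vertex degree in G. -/

import Mathlib

open scoped Classical

noncomputable section

variable {V : Type*} [Fintype V] [DecidableEq V]

/-- The number of shortest paths between `s` and `t` in `G` (σ_G(s,t)). -/
def numSP (G : SimpleGraph V) (s t : V) : ℕ :=
  Nat.card {w : G.Walk s t // w.length = G.dist s t}

/-- The number of shortest paths between `s` and `t` in `G` passing through edge `e`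
(σ_G(s,t | e)). -/
def numSPthru (G : SimpleGraph V) (s t : V) (e : Sym2 V) : ℕ :=
  Nat.card {w : G.Walk s t // w.length = G.dist s t ∧ e ∈ w.edges}

/-- `N_G(t)`: the vertices of `Vsrc \ {t}` reachable from `t` in `G` at minimum distance
from `t`. -/
def nearestSources (Vsrc : Finset V) (G : SimpleGraph V) (t : V) : Finset V :=
  ((Vsrc.erase t).filter (fun s => G.Reachable t s)).filter
    (fun s => ∀ s' ∈ (Vsrc.erase t).filter (fun s'' => G.Reachable t s''),
      G.dist t s ≤ G.dist t s')

/-- The load of edge `e` in `G`: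
`load_G(e) = Σ_{t ∈ Vld} Σ_{s ∈ N_G(t)} σ_G(s,t|e) / (|N_G(t)|·σ_G(s,t))`. -/
def eload (Vsrc Vld : Finset V) (G : SimpleGraph V) (e : Sym2 V) : ℝ :=
  ∑ t ∈ Vld, ∑ s ∈ nearestSources Vsrc G t,
    (numSPthru G s t e : ℝ) / (((nearestSources Vsrc G t).card : ℝ) * (numSP G s t : ℝ))

/-- The failure operator: removes every edge whose current load exceeds its capacity
`c_e = (1+α)·load_{G₀}(e)`. -/
def Fop (Vsrc Vld : Finset V) (G0 : SimpleGraph V) (α : ℝ) (G : SimpleGraph V) :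
    SimpleGraph V where
  Adj u v := G.Adj u v ∧ eload Vsrc Vld G s(u, v) ≤ (1 + α) * eload Vsrc Vld G0 s(u, v)
  symm := by
    constructor
    intro u v h
    refine ⟨h.1.symm, ?_⟩
    rw [Sym2.eq_swap]
    exact h.2
  loopless := ⟨fun v h => G.loopless.irrefl v h.1⟩

/-- `F*(G)`: the fixed point reached by iterating the failure operator (reached after at
most `|E|+1 ≤ (card V)^2` applications, since each non-trivial application removes an edge). -/
def Fstar (Vsrc Vld : Finset V) (G0 : SimpleGraph V) (α : ℝ) (G : SimpleGraph V) :
    SimpleGraph V :=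
  (Fop Vsrc Vld G0 α)^[Fintype.card V ^ 2] G

/-- `G − S`: the (induced) subgraph obtained by deleting the vertices of `S`. -/
def deleteVerts (G : SimpleGraph V) (S : Finset V) : SimpleGraph V where
  Adj u v := G.Adj u v ∧ u ∉ S ∧ v ∉ S
  symm := ⟨fun u v h => ⟨h.1.symm, h.2.2, h.2.1⟩⟩
  loopless := ⟨fun v h => G.loopless.irrefl v h.1⟩

/-- `disc(G)`: the number of load nodes from which no source (other than itself) is
reachable in `G`. -/
def disc (Vsrc Vld : Finset V) (G : SimpleGraph V) : ℕ :=
  (Vld.filter (fun t => ∀ s ∈ Vsrc, s ≠ t → ¬ G.Reachable t s)).card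

/-- The payoff `p(V_a,V_d) = disc(F*(G₀ − (V_a \ V_d)))`. -/
def payoff (Vsrc Vld : Finset V) (G0 : SimpleGraph V) (α : ℝ) (Va Vd : Finset V) : ℕ :=
  disc Vsrc Vld (Fstar Vsrc Vld G0 α (deleteVerts G0 (Va \ Vd)))


section Aux
variable {V : Type*} [Fintype V] [DecidableEq V]

omit [Fintype V] [DecidableEq V] in
lemma walk_length_one {G : SimpleGraph V} {s t : V} (w : G.Walk s t) (hw : w.length = 1) :
    ∃ h : G.Adj s t, w = SimpleGraph.Walk.cons h SimpleGraph.Walk.nil := by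
  cases w with
  | nil => simp at hw
  | cons h p =>
    cases p with
    | nil => exact ⟨h, rfl⟩
    | cons h' p' => simp [SimpleGraph.Walk.length_cons] at hw

lemma numSP_adj {G : SimpleGraph V} {s t : V} (h : G.Adj s t) : numSP G s t = 1 := by
  rw [numSP, Nat.card_eq_one_iff_unique]
  have hd : G.dist s t = 1 := SimpleGraph.dist_eq_one_iff_adj.mpr h
  constructor
  · constructor
    rintro ⟨w1, hw1⟩ ⟨w2, hw2⟩
    obtain ⟨h1, e1⟩ := walk_length_one w1 (by rw [hw1, hd])
    obtain ⟨h2, e2⟩ := walk_length_one w2 (by rw [hw2, hd])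
    simp [e1, e2]
  · exact ⟨⟨SimpleGraph.Walk.cons h SimpleGraph.Walk.nil, by simp [hd]⟩⟩

lemma numSPthru_adj {G : SimpleGraph V} {s t : V} (h : G.Adj s t) (e : Sym2 V) :
    numSPthru G s t e = if e = s(s, t) then 1 else 0 := by
  have hd : G.dist s t = 1 := SimpleGraph.dist_eq_one_iff_adj.mpr h
  rw [numSPthru]
  split_ifs with he
  · rw [Nat.card_eq_one_iff_unique]
    constructor
    · constructor
      rintro ⟨w1, hw1, _⟩ ⟨w2, hw2, _⟩
      obtain ⟨h1, e1⟩ := walk_length_one w1 (by rw [hw1, hd])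
      obtain ⟨h2, e2⟩ := walk_length_one w2 (by rw [hw2, hd])
      simp [e1, e2]
    · exact ⟨⟨SimpleGraph.Walk.cons h SimpleGraph.Walk.nil, by simp [hd, he]⟩⟩
  · rw [Nat.card_eq_zero]
    left
    constructor
    rintro ⟨w, hw, hme⟩
    obtain ⟨h1, e1⟩ := walk_length_one w (by rw [hw, hd])
    rw [e1] at hme
    simp [SimpleGraph.Walk.edges_cons] at hme
    exact he hme

lemma nearestSources_univ {G : SimpleGraph V} (t : V) :
    nearestSources Finset.univ G t = G.neighborFinset t := by
  ext s
  simp only [nearestSources, Finset.mem_filter, Finset.mem_erase, Finset.mem_univ,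
    and_true, true_and, SimpleGraph.mem_neighborFinset]
  constructor
  · rintro ⟨⟨hne, hr⟩, hmin⟩
    obtain ⟨w⟩ := id hr
    have hnb : ∃ u, G.Adj t u := by
      cases w with
      | nil => exact absurd rfl (Ne.symm hne)
      | cons h p => exact ⟨_, h⟩
    obtain ⟨u, hu⟩ := hnb
    have hut : u ≠ t := fun e => G.loopless.irrefl t (e ▸ hu)
    have h1 : G.dist t s ≤ 1 := by
      have := hmin u ⟨hut, hu.reachable⟩
      rwa [SimpleGraph.dist_eq_one_iff_adj.mpr hu] at this
    have h0 : G.dist t s ≠ 0 := by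
      rw [Ne, hr.dist_eq_zero_iff]
      exact Ne.symm hne
    have : G.dist t s = 1 := le_antisymm h1 (Nat.one_le_iff_ne_zero.mpr h0)
    exact SimpleGraph.dist_eq_one_iff_adj.mp this
  · intro ha
    refine ⟨⟨ha.ne', ha.reachable⟩, ?_⟩
    rintro s' ⟨hs1, hs2⟩
    rw [SimpleGraph.dist_eq_one_iff_adj.mpr ha]
    have : G.dist t s' ≠ 0 := by
      rw [Ne, hs2.dist_eq_zero_iff]
      exact Ne.symm hs1
    exact Nat.one_le_iff_ne_zero.mpr this

end Aux

/-- When every vertex is both a source and a load, the load of any edge `{i,j}` of any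
subgraph `G` of `G₀` is `1/deg_G(i) + 1/deg_G(j)`. -/
theorem eload_eq_inv_degree_add_inv_degree {V : Type*} [Fintype V] [DecidableEq V]
    (G0 : SimpleGraph V) :
    ∀ G : SimpleGraph V, G ≤ G0 → ∀ i j : V, G.Adj i j →
      eload Finset.univ Finset.univ G s(i, j) =
        1 / (G.degree i : ℝ) + 1 / (G.degree j : ℝ) := by
  intro G _ i j hij
  have hne : i ≠ j := hij.ne
  have key : ∀ t : V, ∑ s ∈ nearestSources Finset.univ G t,
      (numSPthru G s t s(i,j) : ℝ) /
        (((nearestSources Finset.univ G t).card : ℝ) * (numSP G s t : ℝ)) =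
      (if t = i then 1 / (G.degree i : ℝ) else 0) +
      (if t = j then 1 / (G.degree j : ℝ) else 0) := by
    intro t
    rw [nearestSources_univ]
    have hstep : ∀ s ∈ G.neighborFinset t,
        (numSPthru G s t s(i,j) : ℝ) /
          (((G.neighborFinset t).card : ℝ) * (numSP G s t : ℝ)) =
        (if s(i,j) = s(s,t) then (1:ℝ) else 0) / (G.degree t : ℝ) := by
      intro s hs
      rw [SimpleGraph.mem_neighborFinset] at hs
      rw [numSP_adj hs.symm, numSPthru_adj hs.symm, SimpleGraph.card_neighborFinset_eq_degree]
      split_ifs <;> simp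
    rw [Finset.sum_congr rfl hstep]
    by_cases hti : t = i
    · subst hti
      have heq : ∀ s ∈ G.neighborFinset t,
          (if s(t,j) = s(s,t) then (1:ℝ) else 0) / (G.degree t : ℝ)
          = if s = j then 1 / (G.degree t : ℝ) else 0 := by
        intro s hs
        have hiff : (s(t,j) = s(s,t)) ↔ s = j := by
          rw [Sym2.eq_iff]
          constructor
          · rintro (⟨h1, h2⟩ | ⟨h1, h2⟩)
            · exact absurd h2 (Ne.symm hne)
            · exact h2.symm
          · intro h; right; exact ⟨rfl, h.symm⟩
        simp only [hiff]
        split_ifs <;> simp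
      rw [Finset.sum_congr rfl heq, Finset.sum_ite_eq' (G.neighborFinset t) j]
      simp [SimpleGraph.mem_neighborFinset, hij, hne]
    · by_cases htj : t = j
      · subst htj
        have heq : ∀ s ∈ G.neighborFinset t,
            (if s(i,t) = s(s,t) then (1:ℝ) else 0) / (G.degree t : ℝ)
            = if s = i then 1 / (G.degree t : ℝ) else 0 := by
          intro s hs
          have hiff : (s(i,t) = s(s,t)) ↔ s = i := by
            rw [Sym2.eq_iff]
            constructor
            · rintro (⟨h1, h2⟩ | ⟨h1, h2⟩)
              · exact h1.symm
              · exact absurd h1 hne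
            · intro h; left; exact ⟨h.symm, rfl⟩
          simp only [hiff]
          split_ifs <;> simp
        rw [Finset.sum_congr rfl heq, Finset.sum_ite_eq' (G.neighborFinset t) i]
        simp [SimpleGraph.mem_neighborFinset, hij.symm, hti, hne]
      · have heq : ∀ s ∈ G.neighborFinset t,
            (if s(i,j) = s(s,t) then (1:ℝ) else 0) / (G.degree t : ℝ) = 0 := by
          intro s hs
          have hnee : s(i,j) ≠ s(s,t) := by
            rw [Ne, Sym2.eq_iff]
            rintro (⟨h1, h2⟩ | ⟨h1, h2⟩)
            · exact htj h2.symm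
            · exact hti h1.symm
          simp [hnee]
        rw [Finset.sum_congr rfl heq]
        simp [hti, htj]
  rw [eload, Finset.sum_congr rfl (fun t _ => key t), Finset.sum_add_distrib,
    Finset.sum_ite_eq' Finset.univ i, Finset.sum_ite_eq' Finset.univ j]
  simp

end
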